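/- arXiv:1401.0641 — 5 statements merged into one kernel-verified Lean document; each statement's English description precedes it below -/
import Mathlib

section
/- Let b₂b₃ < 0, γ = √(−b₃/b₂), H > 0, and let θ : ℝ → ℝ be a twice differentiable solution of the pendulum equation θ'' = (b₁b₃/γ)·√(2H)·cos θ. Then x₁(t) = (γ/b₃)·θ'(t), x₂(t) = √(2H)·cos θ(t), x₃(t) = γ√(2H)·sin θ(t) is a solution of the Maxwell-Bloch top system ẋ₁ = b₁x₂, ẋ₂ = b₂x₁x₃, ẋ₃ = b₃x₁x₂, and it satisfies x₂(t)² − (b₂/b₃)·x₃(t)² = 2H for all t. -/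
/-- If `θ` solves the pendulum equation `θ'' = (b₁b₃/γ)√(2H) cos θ` with
`γ = √(−b₃/b₂)`, then `(x₁,x₂,x₃) = ((γ/b₃)θ', √(2H)cos θ, γ√(2H)sin θ)` solves
the Maxwell-Bloch top system and lies on the level surface `x₂² − (b₂/b₃)x₃² = 2H`. -/
theorem maxwell_bloch_top_pendulum_solution (b₁ b₂ b₃ : ℝ)
    (hb₁ : b₁ ≠ 0) (hb₂ : b₂ ≠ 0) (hb₃ : b₃ ≠ 0) (hb₂₃ : b₂ * b₃ < 0)
    (γ : ℝ) (hγ : γ = Real.sqrt (-b₃ / b₂))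
    (H : ℝ) (hH : 0 < H)
    (θ θ' : ℝ → ℝ)
    (hθ : ∀ t, HasDerivAt θ (θ' t) t)
    (hθ' : ∀ t, HasDerivAt θ' (b₁ * b₃ / γ * Real.sqrt (2 * H) * Real.cos (θ t)) t) :
    (∀ t, HasDerivAt (fun s => γ / b₃ * θ' s)
        (b₁ * (Real.sqrt (2 * H) * Real.cos (θ t))) t) ∧
    (∀ t, HasDerivAt (fun s => Real.sqrt (2 * H) * Real.cos (θ s))
        (b₂ * (γ / b₃ * θ' t) * (γ * Real.sqrt (2 * H) * Real.sin (θ t))) t) ∧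
    (∀ t, HasDerivAt (fun s => γ * Real.sqrt (2 * H) * Real.sin (θ s))
        (b₃ * (γ / b₃ * θ' t) * (Real.sqrt (2 * H) * Real.cos (θ t))) t) ∧
    (∀ t, (Real.sqrt (2 * H) * Real.cos (θ t)) ^ 2
        - b₂ / b₃ * (γ * Real.sqrt (2 * H) * Real.sin (θ t)) ^ 2 = 2 * H) := by
  have hpos : 0 < -b₃ / b₂ := by
    rcases hb₂.lt_or_gt with h | h
    · rw [div_pos_iff]; right; exact ⟨by nlinarith, h⟩
    · rw [div_pos_iff]; left; exact ⟨by nlinarith, h⟩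
  have hγpos : 0 < γ := hγ ▸ Real.sqrt_pos.mpr hpos
  have hγne : γ ≠ 0 := ne_of_gt hγpos
  have hγsq : γ ^ 2 = -b₃ / b₂ := by
    rw [hγ, Real.sq_sqrt hpos.le]
  have h2H : Real.sqrt (2 * H) ^ 2 = 2 * H := Real.sq_sqrt (by linarith)
  refine ⟨?_, ?_, ?_, ?_⟩
  · intro t
    have := (hθ' t).const_mul (γ / b₃)
    refine this.congr_deriv ?_
    field_simp
  · intro t
    have := ((Real.hasDerivAt_cos (θ t)).comp t (hθ t)).const_mul (Real.sqrt (2 * H))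
    refine this.congr_deriv ?_
    have hc : b₂ * γ ^ 2 / b₃ = -1 := by
      rw [hγsq]; field_simp
    linear_combination (-(Real.sqrt (2 * H) * Real.sin (θ t) * θ' t)) * hc
  · intro t
    have := ((Real.hasDerivAt_sin (θ t)).comp t (hθ t)).const_mul (γ * Real.sqrt (2 * H))
    refine this.congr_deriv ?_
    field_simp
  · intro t
    have h : b₂ / b₃ * γ ^ 2 = -1 := by rw [hγsq]; field_simp
    have hpyth := Real.sin_sq_add_cos_sq (θ t)
    linear_combination (-(Real.sqrt (2 * H) ^ 2 * Real.sin (θ t) ^ 2)) * h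
      + Real.sqrt (2 * H) ^ 2 * hpyth + h2H
end

section
/- Let P̄(x) be the skew-symmetric 3×3 matrix with P̄₁₂ = (b₁b₂/b₃)x₃, P̄₁₃ = b₁x₂, P̄₂₃ = 0, and H̄(x) = −(b₃/(2b₁))x₁² + x₃. Then P̄(x)·∇H̄(x) = (b₁x₂, b₂x₁x₃, b₃x₁x₂) for all x ∈ ℝ³, and moreover C̄(x) = (b₁/2)(x₂² − (b₂/b₃)x₃²) satisfies P̄(x)·∇C̄(x) = 0 for all x. -/
open Matrix

/-- With `P̄(x)` the skew-symmetric matrix with `P̄₁₂ = (b₁b₂/b₃)x₃, P̄₁₃ = b₁x₂,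
`P̄₂₃ = 0`, and `H̄(x) = −(b₃/(2b₁))x₁² + x₃`, we have
`P̄(x)·∇H̄(x) = (b₁x₂, b₂x₁x₃, b₃x₁x₂)`; moreover `C̄(x) = (b₁/2)(x₂² − (b₂/b₃)x₃²)`
satisfies `P̄(x)·∇C̄(x) = 0`. -/
theorem maxwell_bloch_second_realization (b₁ b₂ b₃ : ℝ)
    (hb₁ : b₁ ≠ 0) (hb₂ : b₂ ≠ 0) (hb₃ : b₃ ≠ 0)
    (Hbar Cbar : (Fin 3 → ℝ) → ℝ)
    (hHbar : Hbar = fun x => -(b₃ / (2 * b₁)) * (x 0) ^ 2 + x 2)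
    (hCbar : Cbar = fun x => b₁ / 2 * ((x 1) ^ 2 - b₂ / b₃ * (x 2) ^ 2))
    (Pbar : (Fin 3 → ℝ) → Matrix (Fin 3) (Fin 3) ℝ)
    (hPbar : ∀ x, Pbar x = !![0, b₁ * b₂ / b₃ * x 2, b₁ * x 1;
      -(b₁ * b₂ / b₃ * x 2), 0, 0; -(b₁ * x 1), 0, 0]) :
    ∀ x : Fin 3 → ℝ,
      ((Pbar x) *ᵥ (fun i => (fderiv ℝ Hbar x) (Pi.single i 1)) =
        ![b₁ * x 1, b₂ * x 0 * x 2, b₃ * x 0 * x 1]) ∧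
      ((Pbar x) *ᵥ (fun i => (fderiv ℝ Cbar x) (Pi.single i 1)) = 0) := by
  intro x
  set P : Fin 3 → ((Fin 3 → ℝ) →L[ℝ] ℝ) := fun i => ContinuousLinearMap.proj i with hP
  have proj : ∀ i : Fin 3, HasFDerivAt (fun x : Fin 3 → ℝ => x i) (P i) x := fun i =>
    (P i).hasFDerivAt
  have hsq : ∀ i, HasFDerivAt (fun y : Fin 3 → ℝ => y i ^ 2) ((2 * x i) • P i) x :=
    fun i => by simpa [pow_two, two_mul, add_smul, Pi.mul_def] using (proj i).mul (proj i)
  have hH : HasFDerivAt Hbar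
      ((-(b₃ / (2 * b₁))) • ((2 * x 0) • P 0) + P 2) x := by
    rw [hHbar]
    exact (((hsq 0).const_mul _)).add (proj 2)
  have hC : HasFDerivAt Cbar
      ((b₁ / 2) • ((2 * x 1) • P 1 - (b₂ / b₃) • ((2 * x 2) • P 2))) x := by
    rw [hCbar]
    exact ((hsq 1).sub ((hsq 2).const_mul _)).const_mul _
  rw [hH.fderiv, hC.fderiv, hPbar]
  constructor <;> funext i <;> fin_cases i <;>
    simp [mulVec, dotProduct, Fin.sum_univ_succ, Pi.single_apply, hP, ContinuousLinearMap.proj_apply] <;>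
    field_simp <;> ring
end

section
/- Assume b₂b₃ < 0 and m ≠ 0. Define L(x) = (1/2)·(−(b₃/(2b₁))x₁² + x₃ + (b₃/(2b₁))m²)² + (1/2)·(x₂² − (b₂/b₃)x₃²). Then L(m,0,0) = 0, L(x) > 0 for all x ≠ (m,0,0) and x ≠ (−m,0,0), and the derivative of L along the Maxwell-Bloch top vector field vanishes: ∇L(x)·(b₁x₂, b₂x₁x₃, b₃x₁x₂) = 0 for all x ∈ ℝ³. -/
open Matrix

noncomputable def MBpr (i : Fin 3) : (Fin 3 → ℝ) →L[ℝ] ℝ := ContinuousLinearMap.proj i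

lemma MB_hasFDerivAt (c k m : ℝ) (x : Fin 3 → ℝ) :
    HasFDerivAt (fun y : Fin 3 → ℝ => 1 / 2 * (-c * (y 0) ^ 2 + y 2 + c * m ^ 2) ^ 2
        + 1 / 2 * ((y 1) ^ 2 - k * (y 2) ^ 2))
      (((-c * (x 0) ^ 2 + x 2 + c * m ^ 2) * (-(2 * c) * x 0)) • MBpr 0
        + (x 1) • MBpr 1
        + ((-c * (x 0) ^ 2 + x 2 + c * m ^ 2) - k * x 2) • MBpr 2) x := by
  have h0 : HasFDerivAt (fun y : Fin 3 → ℝ => y 0) (MBpr 0) x := hasFDerivAt_apply 0 x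
  have h1 : HasFDerivAt (fun y : Fin 3 → ℝ => y 1) (MBpr 1) x := hasFDerivAt_apply 1 x
  have h2 : HasFDerivAt (fun y : Fin 3 → ℝ => y 2) (MBpr 2) x := hasFDerivAt_apply 2 x
  have hA : HasFDerivAt (fun y : Fin 3 → ℝ => -c * (y 0) ^ 2 + y 2 + c * m ^ 2)
      ((-c) • (((2:ℕ) * (x 0) ^ 1 : ℝ) • MBpr 0) + MBpr 2) x :=
    ((((hasDerivAt_pow 2 (x 0)).comp_hasFDerivAt x h0).const_mul (-c)).add h2).add_const
      (c * m ^ 2)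
  have hfull := (((hasDerivAt_pow 2 _).comp_hasFDerivAt x hA).const_mul ((1:ℝ) / 2)).add
    ((((hasDerivAt_pow 2 (x 1)).comp_hasFDerivAt x h1).sub
      (((hasDerivAt_pow 2 (x 2)).comp_hasFDerivAt x h2).const_mul k)).const_mul ((1:ℝ) / 2))
  refine hfull.congr_fderiv ?_
  ext y
  simp [MBpr, ContinuousLinearMap.proj_apply]
  ring

set_option maxHeartbeats 1600000 in
/-- Lyapunov function for the equilibrium `(m,0,0)` of the Maxwell-Bloch top system
when `b₂b₃ < 0`: `L(m,0,0) = 0`, `L > 0` away from `(±m,0,0)`, and the derivative of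
`L` along the Maxwell-Bloch top vector field vanishes. -/
theorem maxwell_bloch_lyapunov_e1 (b₁ b₂ b₃ m : ℝ)
    (hb₁ : b₁ ≠ 0) (hb₂ : b₂ ≠ 0) (hb₃ : b₃ ≠ 0) (hb₂₃ : b₂ * b₃ < 0) (hm : m ≠ 0)
    (L : (Fin 3 → ℝ) → ℝ)
    (hL : L = fun x => 1 / 2 * (-(b₃ / (2 * b₁)) * (x 0) ^ 2 + x 2
        + b₃ / (2 * b₁) * m ^ 2) ^ 2
      + 1 / 2 * ((x 1) ^ 2 - b₂ / b₃ * (x 2) ^ 2)) :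
    L ![m, 0, 0] = 0 ∧
    (∀ x : Fin 3 → ℝ, x ≠ ![m, 0, 0] → x ≠ ![-m, 0, 0] → 0 < L x) ∧
    (∀ x : Fin 3 → ℝ,
      (fun i => (fderiv ℝ L x) (Pi.single i 1)) ⬝ᵥ
        ![b₁ * x 1, b₂ * x 0 * x 2, b₃ * x 0 * x 1] = 0) := by
  obtain ⟨c, hc⟩ : ∃ c : ℝ, c = b₃ / (2 * b₁) := ⟨_, rfl⟩
  obtain ⟨k, hk⟩ : ∃ k : ℝ, k = b₂ / b₃ := ⟨_, rfl⟩
  rw [← hc, ← hk] at hL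
  have hc0 : c ≠ 0 := by rw [hc]; exact div_ne_zero hb₃ (by simp [hb₁])
  have hkneg : k < 0 := by
    have : k = b₂ * b₃ / b₃ ^ 2 := by rw [hk]; field_simp
    rw [this]
    exact div_neg_of_neg_of_pos hb₂₃ (by positivity)
  refine ⟨?_, ?_, ?_⟩
  · simp [hL]
  · intro x hx1 hx2
    have hform : L x = 1 / 2 * (-c * (x 0) ^ 2 + x 2 + c * m ^ 2) ^ 2
        + 1 / 2 * (x 1) ^ 2 + 1 / 2 * (-k) * (x 2) ^ 2 := by
      simp [hL]; ring
    have hge : 0 ≤ L x := by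
      nlinarith [sq_nonneg (-c * (x 0) ^ 2 + x 2 + c * m ^ 2),
        sq_nonneg (x 1), sq_nonneg (x 2)]
    rcases hge.lt_or_eq with h | h
    · exact h
    exfalso
    have hA0 : -c * (x 0) ^ 2 + x 2 + c * m ^ 2 = 0 := by
      nlinarith [sq_nonneg (-c * (x 0) ^ 2 + x 2 + c * m ^ 2), sq_nonneg (x 1), sq_nonneg (x 2)]
    have h10 : x 1 = 0 := by
      nlinarith [sq_nonneg (-c * (x 0) ^ 2 + x 2 + c * m ^ 2), sq_nonneg (x 1), sq_nonneg (x 2)]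
    have h20 : x 2 = 0 := by
      have hkx : -k * (x 2) ^ 2 = 0 := by
        nlinarith [sq_nonneg (-c * (x 0) ^ 2 + x 2 + c * m ^ 2), sq_nonneg (x 1),
          mul_nonneg (neg_pos.mpr hkneg).le (sq_nonneg (x 2))]
      have h2 : (x 2) ^ 2 = 0 := by
        rcases mul_eq_zero.1 hkx with h | h
        · exact absurd h (by simpa using hkneg.ne)
        · exact h
      exact pow_eq_zero_iff (two_ne_zero) |>.1 h2
    have hsq : (x 0 - m) * (x 0 + m) = 0 := by
      have : c * (m ^ 2 - (x 0) ^ 2) = 0 := by linear_combination hA0 - h20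
      have h2 : m ^ 2 - (x 0) ^ 2 = 0 := by
        rcases mul_eq_zero.1 this with h | h
        · exact absurd h hc0
        · exact h
      linear_combination -h2
    rcases mul_eq_zero.1 hsq with h | h
    · exact hx1 (by funext i; fin_cases i <;> simp [h10, h20] <;> linarith)
    · exact hx2 (by funext i; fin_cases i <;> simp [h10, h20] <;> linarith)
  · intro x
    have hF := MB_hasFDerivAt c k m x
    have key : ∀ a b d : ℝ,
        ((fun i => (a • MBpr 0 + b • MBpr 1 + d • MBpr 2) (Pi.single i 1)) ⬝ᵥ
          ![b₁ * x 1, b₂ * x 0 * x 2, b₃ * x 0 * x 1])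
        = a * (b₁ * x 1) + b * (b₂ * x 0 * x 2) + d * (b₃ * x 0 * x 1) := by
      intro a b d
      simp [dotProduct, Fin.sum_univ_three, MBpr, Pi.single_apply]
    rw [hL, hF.fderiv, key, hc, hk]
    field_simp
    ring
end

section
/- Let c₁, c₂ > 0 and k ∈ ℝ, and let z : ℝ → ℝ³ be a differentiable solution of ż₁ = (1/c₂)z₂z₃, ż₂ = −(1/c₁)z₁z₃, ż₃ = −(k/c₁)z₁. Then both functions H̃(t) = −(k/(2c₁))·(z₁(t)² + (c₁/c₂)z₂(t)²) and C̃(t) = z₂(t) − (1/(2k))·z₃(t)² (the latter assuming k ≠ 0) are constant along the solution. -/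
/-- For the reduced optimal control system `ż₁ = (1/c₂)z₂z₃, ż₂ = −(1/c₁)z₁z₃,
ż₃ = −(k/c₁)z₁`, both `H̃ = −(k/(2c₁))(z₁² + (c₁/c₂)z₂²)` and (for `k ≠ 0`)
`C̃ = z₂ − (1/(2k))z₃²` are constants of motion. -/
theorem control_system_first_integrals (c₁ c₂ k : ℝ)
    (hc₁ : 0 < c₁) (hc₂ : 0 < c₂)
    (z₁ z₂ z₃ : ℝ → ℝ)
    (h₁ : ∀ t, HasDerivAt z₁ (1 / c₂ * z₂ t * z₃ t) t)
    (h₂ : ∀ t, HasDerivAt z₂ (-(1 / c₁) * z₁ t * z₃ t) t)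
    (h₃ : ∀ t, HasDerivAt z₃ (-(k / c₁) * z₁ t) t) :
    (∀ t, HasDerivAt
      (fun t => -(k / (2 * c₁)) * ((z₁ t) ^ 2 + c₁ / c₂ * (z₂ t) ^ 2)) 0 t) ∧
    (k ≠ 0 → ∀ t, HasDerivAt (fun t => z₂ t - 1 / (2 * k) * (z₃ t) ^ 2) 0 t) := by
  constructor
  · intro t
    have h := (((h₁ t).pow 2).add (((h₂ t).pow 2).const_mul (c₁ / c₂))).const_mul
      (-(k / (2 * c₁)))
    convert h using 1
    case e'_9 =>
      field_simp
      ring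
    all_goals rfl
  · intro hk t
    have h := (h₂ t).sub (((h₃ t).pow 2).const_mul (1 / (2 * k)))
    convert h using 1
    case e'_9 =>
      field_simp
      ring
    all_goals rfl
end

section
/- Let c₁,c₂ > 0, k ∈ ℝ, H > 0, and let θ : ℝ → ℝ be a twice differentiable solution of θ'' = (k/c₁²)·√(c₁/c₂)·√(2H)·cos θ. Then z₁(t) = √(2H)·cos θ(t), z₂(t) = √(c₂/c₁)·√(2H)·sin θ(t), z₃(t) = −√(c₁c₂)·θ'(t) solves the system ż₁ = (1/c₂)z₂z₃, ż₂ = −(1/c₁)z₁z₃, ż₃ = −(k/c₁)z₁, and z₁(t)² + (c₁/c₂)z₂(t)² = 2H for all t. -/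
/-- If `θ` solves the pendulum equation `θ'' = (k/c₁²)√(c₁/c₂)√(2H) cos θ`, then
`(z₁,z₂,z₃) = (√(2H)cos θ, √(c₂/c₁)√(2H)sin θ, −√(c₁c₂)θ')` solves the reduced
optimal control system and lies on the level surface `z₁² + (c₁/c₂)z₂² = 2H`. -/
theorem control_system_pendulum_solution (c₁ c₂ k H : ℝ)
    (hc₁ : 0 < c₁) (hc₂ : 0 < c₂) (hH : 0 < H)
    (θ θ' : ℝ → ℝ)
    (hθ : ∀ t, HasDerivAt θ (θ' t) t)
    (hθ' : ∀ t, HasDerivAt θ'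
      (k / c₁ ^ 2 * Real.sqrt (c₁ / c₂) * Real.sqrt (2 * H) * Real.cos (θ t)) t) :
    (∀ t, HasDerivAt (fun s => Real.sqrt (2 * H) * Real.cos (θ s))
      (1 / c₂ * (Real.sqrt (c₂ / c₁) * Real.sqrt (2 * H) * Real.sin (θ t))
        * (-(Real.sqrt (c₁ * c₂)) * θ' t)) t) ∧
    (∀ t, HasDerivAt (fun s => Real.sqrt (c₂ / c₁) * Real.sqrt (2 * H) * Real.sin (θ s))
      (-(1 / c₁) * (Real.sqrt (2 * H) * Real.cos (θ t))
        * (-(Real.sqrt (c₁ * c₂)) * θ' t)) t) ∧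
    (∀ t, HasDerivAt (fun s => -(Real.sqrt (c₁ * c₂)) * θ' s)
      (-(k / c₁) * (Real.sqrt (2 * H) * Real.cos (θ t))) t) ∧
    (∀ t, (Real.sqrt (2 * H) * Real.cos (θ t)) ^ 2
      + c₁ / c₂ * (Real.sqrt (c₂ / c₁) * Real.sqrt (2 * H) * Real.sin (θ t)) ^ 2
        = 2 * H) := by
  have hb : Real.sqrt (c₂ / c₁) * Real.sqrt (c₁ * c₂) = c₂ := by
    rw [← Real.sqrt_mul (by positivity),
      show c₂ / c₁ * (c₁ * c₂) = c₂ ^ 2 by field_simp]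
    exact Real.sqrt_sq hc₂.le
  have hc : Real.sqrt (c₁ / c₂) * Real.sqrt (c₁ * c₂) = c₁ := by
    rw [← Real.sqrt_mul (by positivity),
      show c₁ / c₂ * (c₁ * c₂) = c₁ ^ 2 by field_simp]
    exact Real.sqrt_sq hc₁.le
  have hca : Real.sqrt (c₁ * c₂) = c₁ * Real.sqrt (c₂ / c₁) := by
    rw [show c₁ * c₂ = c₁ ^ 2 * (c₂ / c₁) by field_simp,
      Real.sqrt_mul (by positivity), Real.sqrt_sq hc₁.le]
  have ha2 : Real.sqrt (c₂ / c₁) ^ 2 * c₁ = c₂ := by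
    rw [Real.sq_sqrt (by positivity : (0:ℝ) ≤ c₂ / c₁)]; field_simp
  have hs2 : Real.sqrt (2 * H) ^ 2 = 2 * H := Real.sq_sqrt (by positivity)
  have hc₁' : c₁ ≠ 0 := hc₁.ne'
  have hc₂' : c₂ ≠ 0 := hc₂.ne'
  set a := Real.sqrt (c₂ / c₁) with ha
  set b := Real.sqrt (c₁ * c₂) with hbdef
  set s := Real.sqrt (2 * H) with hs
  have hb1 : 1 / c₂ * (a * b) = 1 := by rw [hb]; field_simp
  have h2 : 1 / c₁ * b = a := by rw [hca]; field_simp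
  have h3 : 1 / c₁ ^ 2 * (Real.sqrt (c₁ / c₂) * b) = 1 / c₁ := by
    rw [hc]; field_simp
  have e1 : c₁ / c₂ * a ^ 2 = 1 := by
    rw [ha, Real.sq_sqrt (le_of_lt (div_pos hc₂ hc₁))]
    field_simp
  refine ⟨fun t => ?_, fun t => ?_, fun t => ?_, fun t => ?_⟩
  · refine (((hθ t).cos).const_mul s).congr_deriv (Eq.symm ?_)
    linear_combination (-(s * Real.sin (θ t) * θ' t)) * hb1
  · refine (((hθ t).sin).const_mul (a * s)).congr_deriv (Eq.symm ?_)
    linear_combination (s * Real.cos (θ t) * θ' t) * h2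
  · refine ((hθ' t).const_mul (-b)).congr_deriv (Eq.symm ?_)
    linear_combination (k * s * Real.cos (θ t)) * h3
  · have h1 := Real.sin_sq_add_cos_sq (θ t)
    linear_combination (s ^ 2 * Real.sin (θ t) ^ 2) * e1
      + Real.cos (θ t) ^ 2 * hs2
      + Real.sin (θ t) ^ 2 * hs2 + (2 * H) * h1
end
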